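/- For each i with σ(i) ≠ i, the map φ ↦ arcsin(-2 + 2(i + σ(i) - 1)/m - sin φ) maps the interval Θ_i^m = [arcsin(-1+2(i-1)/m), arcsin(-1+2i/m)] bijectively onto Θ_{σ(i)}^m, is monotonically decreasing there, and preserves the measure λ with dλ(φ) = cos φ dφ (i.e., the pushforward of the restriction of λ to Θ_i^m equals the restriction of λ to Θ_{σ(i)}^m). -/

import Mathlib

open Real MeasureTheory Set Filter Topology

noncomputable def lam : Measure ℝ :=
  (volume.restrict (Set.Icc (-(π/2)) (π/2))).withDensity fun φ => ENNReal.ofReal (Real.cos φ)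

lemma icc_arcsin_subset (a b : ℝ) :
    Set.Icc (Real.arcsin a) (Real.arcsin b) ⊆ Set.Icc (-(π/2)) (π/2) := fun x hx =>
  ⟨le_trans (Real.arcsin_mem_Icc a).1 hx.1, le_trans hx.2 (Real.arcsin_mem_Icc b).2⟩

lemma sin_mem_of_mem {a b x : ℝ} (ha : -1 ≤ a) (hab : a ≤ b) (hb : b ≤ 1)
    (hx : x ∈ Set.Icc (Real.arcsin a) (Real.arcsin b)) : Real.sin x ∈ Set.Icc a b := by
  have hsub := icc_arcsin_subset a b
  constructor
  · calc a = Real.sin (Real.arcsin a) := (Real.sin_arcsin ha (hab.trans hb)).symm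
      _ ≤ Real.sin x := Real.strictMonoOn_sin.monotoneOn
          (hsub ⟨le_refl _, hx.1.trans hx.2⟩) (hsub hx) hx.1
  · calc Real.sin x ≤ Real.sin (Real.arcsin b) :=
          Real.strictMonoOn_sin.monotoneOn (hsub hx) (hsub ⟨hx.1.trans hx.2, le_refl _⟩) hx.2
      _ = b := Real.sin_arcsin (ha.trans hab) hb

lemma lam_restrict (a b : ℝ) :
    lam.restrict (Set.Icc (Real.arcsin a) (Real.arcsin b))
      = (volume.restrict (Set.Icc (Real.arcsin a) (Real.arcsin b))).withDensity
          fun φ => ENNReal.ofReal (Real.cos φ) := by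
  rw [lam, MeasureTheory.restrict_withDensity measurableSet_Icc,
    Measure.restrict_restrict measurableSet_Icc, Set.inter_eq_left.mpr (icc_arcsin_subset a b)]

lemma map_sin_lam (a b : ℝ) (ha : -1 ≤ a) (hab : a ≤ b) (hb : b ≤ 1) :
    Measure.map Real.sin (lam.restrict (Set.Icc (Real.arcsin a) (Real.arcsin b)))
      = volume.restrict (Set.Icc a b) := by
  set S := Set.Icc (Real.arcsin a) (Real.arcsin b) with hS
  have hsub : S ⊆ Set.Icc (-(π/2)) (π/2) := icc_arcsin_subset a b
  have hcos : ∀ x ∈ S, 0 ≤ Real.cos x := fun x hx =>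
    Real.cos_nonneg_of_mem_Icc (by simpa using hsub hx)
  have himg : Real.sin '' S = Set.Icc a b := by
    apply Set.Subset.antisymm
    · rintro _ ⟨x, hx, rfl⟩
      exact sin_mem_of_mem ha hab hb hx
    · have := intermediate_value_Icc (Real.monotone_arcsin hab)
        Real.continuous_sin.continuousOn
      rwa [Real.sin_arcsin ha (hab.trans hb), Real.sin_arcsin (ha.trans hab) hb] at this
  have key := MeasureTheory.map_withDensity_abs_det_fderiv_eq_addHaar (volume : Measure ℝ)
    (measurableSet_Icc : MeasurableSet S).nullMeasurableSet
    (f' := fun x => ContinuousLinearMap.toSpanSingleton ℝ (Real.cos x))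
    (fun x _ => ((Real.hasDerivAt_sin x).hasFDerivAt).hasFDerivWithinAt)
    (Real.injOn_sin.mono hsub)
  rw [himg] at key
  rw [lam_restrict a b, ← key]
  congr 1
  apply MeasureTheory.withDensity_congr_ae
  filter_upwards [MeasureTheory.ae_restrict_mem (measurableSet_Icc : MeasurableSet S)] with x hx
  rw [ContinuousLinearMap.det_toSpanSingleton, abs_of_nonneg (hcos x hx)]

lemma map_arcsin_vol (a b : ℝ) (ha : -1 ≤ a) (hab : a ≤ b) (hb : b ≤ 1) :
    Measure.map Real.arcsin (volume.restrict (Set.Icc a b))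
      = lam.restrict (Set.Icc (Real.arcsin a) (Real.arcsin b)) := by
  set S := Set.Icc (Real.arcsin a) (Real.arcsin b) with hS
  have hsub : S ⊆ Set.Icc (-(π/2)) (π/2) := icc_arcsin_subset a b
  rw [← map_sin_lam a b ha hab hb,
    Measure.map_map Real.continuous_arcsin.measurable Real.measurable_sin]
  have : (Real.arcsin ∘ Real.sin) =ᵐ[lam.restrict S] id := by
    filter_upwards [MeasureTheory.ae_restrict_mem (measurableSet_Icc : MeasurableSet S)] with x hx
    exact Real.arcsin_sin (hsub hx).1 (hsub hx).2
  rw [Measure.map_congr this, Measure.map_id]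

lemma map_const_sub (c a b : ℝ) :
    Measure.map (fun x : ℝ => c - x) (volume.restrict (Set.Icc a b))
      = volume.restrict (Set.Icc (c - b) (c - a)) := by
  have hmeas : Measurable (fun x : ℝ => c - x) := measurable_id.const_sub c
  have hpre : (fun x : ℝ => c - x) ⁻¹' Set.Icc (c - b) (c - a) = Set.Icc a b := by
    ext x
    simp only [Set.mem_preimage, Set.mem_Icc]
    constructor <;> intro h <;> constructor <;> linarith [h.1, h.2]
  have hvol : Measure.map (fun x : ℝ => c - x) (volume : Measure ℝ) = volume := by
    have hcomp : (fun x : ℝ => c - x) = (fun x : ℝ => c + x) ∘ (fun x : ℝ => -x) := by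
      funext x; simp [sub_eq_add_neg]
    rw [hcomp, ← Measure.map_map (measurable_const_add c) measurable_neg,
      Measure.map_neg_eq_self, MeasureTheory.map_add_left_eq_self]
  rw [← hpre, ← Measure.restrict_map hmeas measurableSet_Icc, hvol]

theorem stmt4 (m i j : ℕ) (hm : 2 ≤ m) (hi1 : 1 ≤ i) (him : i ≤ m)
    (hj1 : 1 ≤ j) (hjm : j ≤ m) (hij : j ≠ i) :
    Set.BijOn (fun φ => Real.arcsin (-2 + 2*((i:ℝ) + j - 1)/m - Real.sin φ))
      (Set.Icc (Real.arcsin (-1 + 2*((i:ℝ)-1)/m)) (Real.arcsin (-1 + 2*(i:ℝ)/m)))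
      (Set.Icc (Real.arcsin (-1 + 2*((j:ℝ)-1)/m)) (Real.arcsin (-1 + 2*(j:ℝ)/m))) ∧
    StrictAntiOn (fun φ => Real.arcsin (-2 + 2*((i:ℝ) + j - 1)/m - Real.sin φ))
      (Set.Icc (Real.arcsin (-1 + 2*((i:ℝ)-1)/m)) (Real.arcsin (-1 + 2*(i:ℝ)/m))) ∧
    Measure.map (fun φ => Real.arcsin (-2 + 2*((i:ℝ) + j - 1)/m - Real.sin φ))
      (lam.restrict (Set.Icc (Real.arcsin (-1 + 2*((i:ℝ)-1)/m)) (Real.arcsin (-1 + 2*(i:ℝ)/m))))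
      = lam.restrict (Set.Icc (Real.arcsin (-1 + 2*((j:ℝ)-1)/m)) (Real.arcsin (-1 + 2*(j:ℝ)/m))) := by
  have hm0 : (0:ℝ) < m := by
    have : (2:ℝ) ≤ m := by exact_mod_cast hm
    linarith
  have h1i : (1:ℝ) ≤ i := by exact_mod_cast hi1
  have him' : (i:ℝ) ≤ m := by exact_mod_cast him
  have h1j : (1:ℝ) ≤ j := by exact_mod_cast hj1
  have hjm' : (j:ℝ) ≤ m := by exact_mod_cast hjm
  set a : ℝ := -1 + 2*((i:ℝ)-1)/m with hadef
  set b : ℝ := -1 + 2*(i:ℝ)/m with hbdef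
  set a' : ℝ := -1 + 2*((j:ℝ)-1)/m with ha'def
  set b' : ℝ := -1 + 2*(j:ℝ)/m with hb'def
  set c : ℝ := -2 + 2*((i:ℝ) + j - 1)/m with hcdef
  have ha : (-1:ℝ) ≤ a := by
    have := div_nonneg (by linarith : (0:ℝ) ≤ 2*((i:ℝ)-1)) hm0.le
    rw [hadef]; linarith
  have hb : b ≤ 1 := by
    have h : 2*(i:ℝ)/m ≤ 2 := by rw [div_le_iff₀ hm0]; nlinarith
    rw [hbdef]; linarith
  have hab : a ≤ b := by
    have h : 2*((i:ℝ)-1)/m ≤ 2*(i:ℝ)/m := by gcongr; linarith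
    rw [hadef, hbdef]; linarith
  have ha' : (-1:ℝ) ≤ a' := by
    have := div_nonneg (by linarith : (0:ℝ) ≤ 2*((j:ℝ)-1)) hm0.le
    rw [ha'def]; linarith
  have hb' : b' ≤ 1 := by
    have h : 2*(j:ℝ)/m ≤ 2 := by rw [div_le_iff₀ hm0]; nlinarith
    rw [hb'def]; linarith
  have hab' : a' ≤ b' := by
    have h : 2*((j:ℝ)-1)/m ≤ 2*(j:ℝ)/m := by gcongr; linarith
    rw [ha'def, hb'def]; linarith
  have hca : c - a = b' := by
    rw [hcdef, hadef, hb'def]; field_simp; ring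
  have hcb : c - b = a' := by
    rw [hcdef, hbdef, ha'def]; field_simp; ring
  set f : ℝ → ℝ := fun φ => Real.arcsin (c - Real.sin φ) with hfdef
  set Si := Set.Icc (Real.arcsin a) (Real.arcsin b) with hSi
  set Sj := Set.Icc (Real.arcsin a') (Real.arcsin b') with hSj
  have hsubI : Si ⊆ Set.Icc (-(π/2)) (π/2) := icc_arcsin_subset a b
  have hsubJ : Sj ⊆ Set.Icc (-(π/2)) (π/2) := icc_arcsin_subset a' b'
  have hmemI : ∀ t ∈ Si, c - Real.sin t ∈ Set.Icc a' b' := by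
    intro t ht
    have hs := sin_mem_of_mem ha hab hb ht
    exact ⟨by rw [← hcb]; linarith [hs.2], by rw [← hca]; linarith [hs.1]⟩
  have hmemJ : ∀ t ∈ Sj, c - Real.sin t ∈ Set.Icc a b := by
    intro t ht
    have hs := sin_mem_of_mem ha' hab' hb' ht
    have e1 : c - b' = a := by rw [← hca]; ring
    have e2 : c - a' = b := by rw [← hcb]; ring
    exact ⟨by rw [← e1]; linarith [hs.2], by rw [← e2]; linarith [hs.1]⟩
  have hmaps : Set.MapsTo f Si Sj := by
    intro x hx
    have h := hmemI x hx
    exact ⟨Real.monotone_arcsin h.1, Real.monotone_arcsin h.2⟩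
  have hmaps' : Set.MapsTo f Sj Si := by
    intro y hy
    have h := hmemJ y hy
    exact ⟨Real.monotone_arcsin h.1, Real.monotone_arcsin h.2⟩
  have hanti : StrictAntiOn f Si := by
    intro x hx y hy hxy
    have hx' := hmemI x hx
    have hy' := hmemI y hy
    have hlt : Real.sin x < Real.sin y := Real.strictMonoOn_sin (hsubI hx) (hsubI hy) hxy
    exact Real.strictMonoOn_arcsin ⟨by linarith [hy'.1], by linarith [hy'.2]⟩
      ⟨by linarith [hx'.1], by linarith [hx'.2]⟩ (by linarith)
  have hinv : ∀ y ∈ Sj, f (f y) = y := by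
    intro y hy
    have h := hmemJ y hy
    have hsin : Real.sin (f y) = c - Real.sin y :=
      Real.sin_arcsin (by linarith [h.1]) (by linarith [h.2])
    have : f (f y) = Real.arcsin (Real.sin y) := by
      rw [hfdef]; simp only []; rw [hsin]; ring_nf
    rw [this, Real.arcsin_sin (hsubJ hy).1 (hsubJ hy).2]
  refine ⟨⟨hmaps, hanti.injOn, fun y hy => ⟨f y, hmaps' hy, hinv y hy⟩⟩, hanti, ?_⟩
  have hfeq : f = Real.arcsin ∘ ((fun x => c - x) ∘ Real.sin) := rfl
  rw [show (lam.restrict Si) = lam.restrict (Set.Icc (Real.arcsin a) (Real.arcsin b)) from rfl]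
  have hg : Measurable fun x : ℝ => c - x := by fun_prop
  rw [hfeq,
    ← Measure.map_map Real.continuous_arcsin.measurable (hg.comp Real.measurable_sin),
    ← Measure.map_map hg Real.measurable_sin,
    map_sin_lam a b ha hab hb, map_const_sub, hcb, hca, map_arcsin_vol a' b' ha' hab' hb']
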